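/- Let α ∈ (0,1] and let p ∈ H_α[0,1] take values in [0,1], with q = 1−p, and assume p(0) = 1 and q(1) = 1. Let h ∈ H_α[0,1] be the unique function with Qh = h, h(0) = 0 and h(1) = 1, and let (Z_n)_{n≥0} be the canonical Markov chain with transition operator Q started at x ∈ [0,1], with law ℙ_x. Then (Z_n) converges ℙ_x-almost surely to a random variable Z_∞ taking values in {0,1}, and ℙ_x(Z_∞ = 1) = h(x), ℙ_x(Z_∞ = 0) = 1 − h(x). -/

import Mathlib

open MeasureTheory Filter Set
open scoped ENNReal NNReal

/-- The Diaconis–Friedman transition operator with weight function `p` (and `q = 1 − p`). -/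
noncomputable def DFQ (p : ℝ → ℝ) (φ : ℝ → ℝ) : ℝ → ℝ :=
  fun x => p x * (∫ t in (0 : ℝ)..1, φ (t * x)) +
    (1 - p x) * ∫ t in (0 : ℝ)..1, φ (t * x + 1 - t)

/-- `φ` is α-Hölder on `[0,1]` with constant `M`. -/
def HolderOnI (α : ℝ) (M : ℝ) (φ : ℝ → ℝ) : Prop :=
  ∀ x ∈ Set.Icc (0 : ℝ) 1, ∀ y ∈ Set.Icc (0 : ℝ) 1, |φ x - φ y| ≤ M * |x - y| ^ α


namespace Stmt10

noncomputable def clamp (y : ℝ) : ℝ := max 0 (min y 1)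

lemma clamp_mem (y : ℝ) : clamp y ∈ Icc (0:ℝ) 1 :=
  ⟨le_max_left _ _, max_le (by norm_num) (min_le_right _ _)⟩

lemma clamp_of_mem {y : ℝ} (hy : y ∈ Icc (0:ℝ) 1) : clamp y = y := by
  simp [clamp, min_eq_left hy.2, max_eq_right hy.1]

lemma continuous_clamp : Continuous clamp :=
  continuous_const.max (continuous_id.min continuous_const)

lemma holder_continuousOn {α M : ℝ} {φ : ℝ → ℝ} (hα0 : 0 < α) (hH : HolderOnI α M φ) :
    ContinuousOn φ (Icc (0:ℝ) 1) := by
  set M' : ℝ := max M 1 with hM'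
  have hM'pos : 0 < M' := lt_of_lt_of_le one_pos (le_max_right _ _)
  rw [Metric.continuousOn_iff]
  intro b hb ε hε
  refine ⟨(ε / M') ^ (1/α), Real.rpow_pos_of_pos (div_pos hε hM'pos) _, ?_⟩
  intro a ha hab
  have h1 : |φ a - φ b| ≤ M' * |a - b| ^ α := by
    refine le_trans (hH a ha b hb) (mul_le_mul_of_nonneg_right (le_max_left _ _) ?_)
    exact Real.rpow_nonneg (abs_nonneg _) _
  have h2 : |a - b| ^ α < ((ε / M') ^ (1/α)) ^ α := by
    apply Real.rpow_lt_rpow (abs_nonneg _) _ hα0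
    rwa [Real.dist_eq] at hab
  rw [one_div, Real.rpow_inv_rpow (le_of_lt (div_pos hε hM'pos)) (ne_of_gt hα0)] at h2
  rw [Real.dist_eq]
  calc |φ a - φ b| ≤ M' * |a - b| ^ α := h1
    _ < M' * (ε / M') := by exact (mul_lt_mul_iff_right₀ hM'pos).2 h2
    _ = ε := by field_simp

/-- positivity of interval integral of a continuous nonneg function positive somewhere -/
lemma integral_pos_of_continuous {g : ℝ → ℝ} (hg : Continuous g) {a b c : ℝ} (hab : a < b)
    (hnn : ∀ y ∈ Icc a b, 0 ≤ g y) (hc : c ∈ Icc a b) (hgc : 0 < g c) :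
    0 < ∫ t in a..b, g t := by
  obtain ⟨δ, hδ, hball⟩ := Metric.continuousAt_iff.1 hg.continuousAt (ε := g c / 2) (by linarith)
  set l : ℝ := max a (c - δ/2) with hl
  set r : ℝ := min b (c + δ/2) with hr
  have hlr : l < r := by
    rcases hc with ⟨hc1, hc2⟩
    simp only [hl, hr, max_lt_iff, lt_min_iff]
    constructor
    · exact ⟨hab, by linarith⟩
    · exact ⟨by linarith, by linarith⟩
  have hal : a ≤ l := le_max_left _ _
  have hrb : r ≤ b := min_le_left _ _
  have hsub : ∀ y ∈ Set.Ioo l r, 0 < g y := by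
    intro y hy
    have : dist y c < δ := by
      rw [Real.dist_eq, abs_lt]
      have h1 : c - δ/2 ≤ l := le_max_right _ _
      have h2 : r ≤ c + δ/2 := min_le_right _ _
      constructor <;> [linarith [hy.1]; linarith [hy.2]]
    have := hball this
    rw [Real.dist_eq, abs_lt] at this
    linarith [this.1]
  have hint : ∀ u v : ℝ, IntervalIntegrable g volume u v := fun u v => hg.intervalIntegrable u v
  have hsplit : (∫ t in a..b, g t) = (∫ t in a..l, g t) + (∫ t in l..r, g t) + ∫ t in r..b, g t := by
    rw [intervalIntegral.integral_add_adjacent_intervals (hint a l) (hint l r),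
      intervalIntegral.integral_add_adjacent_intervals (hint a r) (hint r b)]
  have h1 : 0 ≤ ∫ t in a..l, g t :=
    intervalIntegral.integral_nonneg hal (fun u hu => hnn u ⟨hu.1, le_trans hu.2 (le_trans hlr.le hrb)⟩)
  have h2 : 0 < ∫ t in l..r, g t := intervalIntegral.intervalIntegral_pos_of_pos_on (hint l r) hsub hlr
  have h3 : 0 ≤ ∫ t in r..b, g t :=
    intervalIntegral.integral_nonneg hrb (fun u hu => hnn u ⟨le_trans hal (le_trans hlr.le hu.1), hu.2⟩)
  linarith

/-- if integral of continuous nonneg function vanishes, function vanishes -/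
lemma eq_zero_of_integral_zero {g : ℝ → ℝ} (hg : Continuous g) {a b : ℝ} (hab : a < b)
    (hnn : ∀ y ∈ Icc a b, 0 ≤ g y) (hI : (∫ t in a..b, g t) = 0) :
    ∀ y ∈ Icc a b, g y = 0 := by
  intro y hy
  by_contra hne
  have hpos : 0 < g y := lt_of_le_of_ne (hnn y hy) (Ne.symm hne)
  exact absurd hI (ne_of_gt (integral_pos_of_continuous hg hab hnn hy hpos))


section DFQlemmas

variable {p g f : ℝ → ℝ} {z : ℝ}

lemma mem_unit_mul {t : ℝ} (ht : t ∈ Icc (0:ℝ) 1) (hz : z ∈ Icc (0:ℝ) 1) :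
    t * z ∈ Icc (0:ℝ) 1 :=
  ⟨mul_nonneg ht.1 hz.1, mul_le_one₀ ht.2 hz.1 hz.2⟩

lemma mem_unit_affine {t : ℝ} (ht : t ∈ Icc (0:ℝ) 1) (hz : z ∈ Icc (0:ℝ) 1) :
    t * z + 1 - t ∈ Icc (0:ℝ) 1 := by
  constructor
  · nlinarith [ht.1, ht.2, hz.1, hz.2]
  · nlinarith [ht.1, ht.2, hz.1, hz.2]

lemma DFQ_congr (hz : z ∈ Icc (0:ℝ) 1) (hfg : ∀ y ∈ Icc (0:ℝ) 1, f y = g y) :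
    DFQ p f z = DFQ p g z := by
  unfold DFQ
  have h1 : (∫ t in (0:ℝ)..1, f (t * z)) = ∫ t in (0:ℝ)..1, g (t * z) := by
    apply intervalIntegral.integral_congr
    intro t ht
    rw [uIcc_of_le (by norm_num : (0:ℝ) ≤ 1)] at ht
    exact hfg _ (mem_unit_mul ht hz)
  have h2 : (∫ t in (0:ℝ)..1, f (t * z + 1 - t)) = ∫ t in (0:ℝ)..1, g (t * z + 1 - t) := by
    apply intervalIntegral.integral_congr
    intro t ht
    rw [uIcc_of_le (by norm_num : (0:ℝ) ≤ 1)] at ht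
    exact hfg _ (mem_unit_affine ht hz)
  rw [h1, h2]

lemma DFQ_eq (hg : Continuous g) (h0 : 0 < z) (h1 : z < 1) :
    DFQ p g z = p z * ((∫ t in (0:ℝ)..z, g t) / z)
      + (1 - p z) * ((∫ t in z..(1:ℝ), g t) / (1 - z)) := by
  unfold DFQ
  have hz0 : z ≠ 0 := ne_of_gt h0
  have hz1 : z - 1 ≠ 0 := by intro hc; apply absurd h1; simp [sub_eq_zero] at hc; simp [hc]
  have e1 : (∫ t in (0:ℝ)..1, g (t * z)) = (∫ t in (0:ℝ)..z, g t) / z := by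
    rw [intervalIntegral.integral_comp_mul_right g hz0]
    simp [smul_eq_mul, div_eq_inv_mul]
  have e2 : (∫ t in (0:ℝ)..1, g (t * z + 1 - t)) = (∫ t in z..(1:ℝ), g t) / (1 - z) := by
    have : (fun t : ℝ => g (t * z + 1 - t)) = fun t : ℝ => g ((z - 1) * t + 1) := by
      funext t; ring_nf
    rw [intervalIntegral.integral_congr (g := fun t : ℝ => g ((z-1) * t + 1))
      (fun t _ => by ring_nf)]
    rw [intervalIntegral.integral_comp_mul_add g hz1 1]
    rw [intervalIntegral.integral_symm]
    simp only [mul_zero, zero_add, mul_one, smul_eq_mul]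
    have hzz : z - 1 + 1 = z := by ring
    rw [hzz, div_eq_mul_inv, show (z-1:ℝ)⁻¹ = -(1-z)⁻¹ by rw [show (z-1:ℝ) = -(1-z) by ring, inv_neg]]
    ring
  rw [e1, e2]

lemma DFQ_zero (hp0 : p 0 = 1) (g : ℝ → ℝ) : DFQ p g 0 = g 0 := by
  unfold DFQ
  simp [hp0]

lemma DFQ_one (hp1 : p 1 = 0) (g : ℝ → ℝ) : DFQ p g 1 = g 1 := by
  unfold DFQ
  simp [hp1]

lemma contint_mul (hg : Continuous g) (z : ℝ) (a b : ℝ) :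
    IntervalIntegrable (fun t => g (t * z)) volume a b :=
  (hg.comp (continuous_id.mul continuous_const)).intervalIntegrable a b

lemma contint_affine (hg : Continuous g) (z : ℝ) (a b : ℝ) :
    IntervalIntegrable (fun t => g (t * z + 1 - t)) volume a b :=
  (hg.comp (((continuous_id.mul continuous_const).add continuous_const).sub
    continuous_id)).intervalIntegrable a b

lemma DFQ_sub (hf : Continuous f) (hg : Continuous g) (z : ℝ) :
    DFQ p (fun y => f y - g y) z = DFQ p f z - DFQ p g z := by
  unfold DFQ
  rw [intervalIntegral.integral_sub (contint_mul hf z 0 1) (contint_mul hg z 0 1),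
    intervalIntegral.integral_sub (contint_affine hf z 0 1) (contint_affine hg z 0 1)]
  ring

lemma DFQ_add (hf : Continuous f) (hg : Continuous g) (z : ℝ) :
    DFQ p (fun y => f y + g y) z = DFQ p f z + DFQ p g z := by
  unfold DFQ
  rw [intervalIntegral.integral_add (contint_mul hf z 0 1) (contint_mul hg z 0 1),
    intervalIntegral.integral_add (contint_affine hf z 0 1) (contint_affine hg z 0 1)]
  ring

lemma DFQ_le_const (hg : Continuous g) (hz : z ∈ Icc (0:ℝ) 1) (hp : p z ∈ Icc (0:ℝ) 1)
    {c : ℝ} (hgc : ∀ y ∈ Icc (0:ℝ) 1, g y ≤ c) : DFQ p g z ≤ c := by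
  have h1 : (∫ t in (0:ℝ)..1, g (t * z)) ≤ ∫ _t in (0:ℝ)..1, c := by
    apply intervalIntegral.integral_mono_on (by norm_num) (contint_mul hg z 0 1)
      (intervalIntegrable_const)
    intro t ht
    exact hgc _ (mem_unit_mul ht hz)
  have h2 : (∫ t in (0:ℝ)..1, g (t * z + 1 - t)) ≤ ∫ _t in (0:ℝ)..1, c := by
    apply intervalIntegral.integral_mono_on (by norm_num) (contint_affine hg z 0 1)
      (intervalIntegrable_const)
    intro t ht
    exact hgc _ (mem_unit_affine ht hz)
  have hc : (∫ _t in (0:ℝ)..1, c) = c := by simp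
  rw [hc] at h1 h2
  unfold DFQ
  nlinarith [hp.1, hp.2, h1, h2, mul_le_mul_of_nonneg_left h1 hp.1,
    mul_le_mul_of_nonneg_left h2 (sub_nonneg.2 hp.2)]

end DFQlemmas

section Harmonic

variable {p h : ℝ → ℝ}

lemma DFQ_const (p : ℝ → ℝ) (c : ℝ) (z : ℝ) : DFQ p (fun _ => c) z = c := by
  unfold DFQ; simp; ring

/-- maximum principle: a continuous Q-harmonic function with nonnegative boundary values
is nonnegative -/
lemma harmonic_nonneg (hhc : ContinuousOn h (Icc (0:ℝ) 1))
    (hp01 : ∀ z ∈ Icc (0:ℝ) 1, p z ∈ Icc (0:ℝ) 1)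
    (hQh : ∀ z ∈ Icc (0:ℝ) 1, DFQ p h z = h z)
    (hb0 : 0 ≤ h 0) (hb1 : 0 ≤ h 1) : ∀ z ∈ Icc (0:ℝ) 1, 0 ≤ h z := by
  set htil : ℝ → ℝ := fun y => h (clamp y) with hhtil
  have hcl : Continuous htil := hhc.comp_continuous continuous_clamp clamp_mem
  have htileq : ∀ y ∈ Icc (0:ℝ) 1, htil y = h y := fun y hy => by
    rw [hhtil]; simp only []; rw [clamp_of_mem hy]
  obtain ⟨zs, hzs, hmin⟩ := isCompact_Icc.exists_isMinOn (α := ℝ)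
    (⟨0, by norm_num⟩ : (Icc (0:ℝ) 1).Nonempty) hhc
  set m := h zs with hm
  intro z hz
  by_contra hneg
  push_neg at hneg
  have hmneg : m < 0 := lt_of_le_of_lt (isMinOn_iff.1 hmin z hz) hneg
  have hzs0 : zs ≠ 0 := fun hc => by rw [hc] at hm; rw [hm] at hmneg; linarith
  have hzs1 : zs ≠ 1 := fun hc => by rw [hc] at hm; rw [hm] at hmneg; linarith
  have h0lt : 0 < zs := lt_of_le_of_ne hzs.1 (Ne.symm hzs0)
  have h1lt : zs < 1 := lt_of_le_of_ne hzs.2 hzs1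
  have key : DFQ p htil zs = h zs := by
    rw [DFQ_congr hzs htileq]; exact hQh zs hzs
  rw [DFQ_eq hcl h0lt h1lt] at key
  set I0 := ∫ t in (0:ℝ)..zs, htil t with hI0
  set I1 := ∫ t in zs..(1:ℝ), htil t with hI1
  have hI0ge : zs * m ≤ I0 := by
    have : (∫ _t in (0:ℝ)..zs, m) ≤ I0 := by
      apply intervalIntegral.integral_mono_on h0lt.le intervalIntegrable_const
        (hcl.intervalIntegrable 0 zs)
      intro t ht
      have ht' : t ∈ Icc (0:ℝ) 1 := ⟨ht.1, le_trans ht.2 h1lt.le⟩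
      rw [htileq t ht']
      exact isMinOn_iff.1 hmin _ ht'
    simpa using this
  have hI1ge : (1 - zs) * m ≤ I1 := by
    have : (∫ _t in zs..(1:ℝ), m) ≤ I1 := by
      apply intervalIntegral.integral_mono_on h1lt.le intervalIntegrable_const
        (hcl.intervalIntegrable zs 1)
      intro t ht
      have ht' : t ∈ Icc (0:ℝ) 1 := ⟨le_trans h0lt.le ht.1, ht.2⟩
      rw [htileq t ht']
      exact isMinOn_iff.1 hmin _ ht'
    simpa using this
  set a := I0 / zs with ha
  set b := I1 / (1 - zs) with hb
  have ham : m ≤ a := (le_div_iff₀ h0lt).2 (by linarith)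
  have hbm : m ≤ b := (le_div_iff₀ (by linarith)).2 (by linarith)
  have hpz := hp01 zs hzs
  have hsum : p zs * (a - m) + (1 - p zs) * (b - m) = 0 := by
    have : p zs * a + (1 - p zs) * b = m := key
    nlinarith [this]
  have hterm1 : 0 ≤ p zs * (a - m) := mul_nonneg hpz.1 (by linarith)
  have hterm2 : 0 ≤ (1 - p zs) * (b - m) := mul_nonneg (by linarith [hpz.2]) (by linarith)
  rcases eq_or_lt_of_le hpz.1 with hp0 | hp0
  · -- p zs = 0, so b = m
    have hbem : b = m := by
      have : (1 - p zs) * (b - m) = 0 := by linarith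
      rw [← hp0] at this
      have : b - m = 0 := by linarith [this]
      linarith
    have hIeq : (∫ t in zs..(1:ℝ), (htil t - m)) = 0 := by
      rw [intervalIntegral.integral_sub (hcl.intervalIntegrable zs 1) intervalIntegrable_const]
      simp only [intervalIntegral.integral_const, smul_eq_mul]
      have h2 : I1 = m * (1 - zs) := (div_eq_iff (by linarith : (1:ℝ)-zs ≠ 0)).1 hbem
      rw [← hI1, h2]; ring
    have := eq_zero_of_integral_zero (g := fun t => htil t - m)
      (hcl.sub continuous_const) h1lt
      (fun y hy => by
        have hy' : y ∈ Icc (0:ℝ) 1 := ⟨le_trans h0lt.le hy.1, hy.2⟩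
        show 0 ≤ htil y - m
        rw [htileq y hy']; linarith [isMinOn_iff.1 hmin _ hy'])
      hIeq 1 ⟨h1lt.le, le_rfl⟩
    have : htil 1 = m := by
      have h3 : htil 1 - m = 0 := this
      linarith
    rw [htileq 1 (by norm_num)] at this
    linarith
  · -- p zs > 0, so a = m
    have haem : a = m := by
      have h1 : p zs * (a - m) = 0 := by linarith
      have := mul_eq_zero.1 h1
      rcases this with h | h
      · linarith
      · linarith
    have hIeq : (∫ t in (0:ℝ)..zs, (htil t - m)) = 0 := by
      rw [intervalIntegral.integral_sub (hcl.intervalIntegrable 0 zs) intervalIntegrable_const]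
      simp only [intervalIntegral.integral_const, smul_eq_mul]
      have h2 : I0 = m * zs := (div_eq_iff (ne_of_gt h0lt)).1 haem
      rw [← hI0, h2]; ring
    have := eq_zero_of_integral_zero (g := fun t => htil t - m)
      (hcl.sub continuous_const) h0lt
      (fun y hy => by
        have hy' : y ∈ Icc (0:ℝ) 1 := ⟨hy.1, le_trans hy.2 h1lt.le⟩
        show 0 ≤ htil y - m
        rw [htileq y hy']; linarith [isMinOn_iff.1 hmin _ hy'])
      hIeq 0 ⟨le_rfl, h0lt.le⟩
    have : htil 0 = m := by
      have h3 : htil 0 - m = 0 := this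
      linarith
    rw [htileq 0 (by norm_num)] at this
    linarith

lemma harmonic_mem (hhc : ContinuousOn h (Icc (0:ℝ) 1))
    (hp01 : ∀ z ∈ Icc (0:ℝ) 1, p z ∈ Icc (0:ℝ) 1)
    (hQh : ∀ z ∈ Icc (0:ℝ) 1, DFQ p h z = h z)
    (hh0 : h 0 = 0) (hh1 : h 1 = 1) : ∀ z ∈ Icc (0:ℝ) 1, h z ∈ Icc (0:ℝ) 1 := by
  have hlow := harmonic_nonneg hhc hp01 hQh (le_of_eq hh0.symm) (by rw [hh1]; norm_num)
  set htil : ℝ → ℝ := fun y => h (clamp y) with hhtil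
  have hcl : Continuous htil := hhc.comp_continuous continuous_clamp clamp_mem
  have htileq : ∀ y ∈ Icc (0:ℝ) 1, htil y = h y := fun y hy => by
    rw [hhtil]; simp only []; rw [clamp_of_mem hy]
  have hg'c : ContinuousOn (fun y => 1 - h y) (Icc (0:ℝ) 1) := continuousOn_const.sub hhc
  have hQg' : ∀ z ∈ Icc (0:ℝ) 1, DFQ p (fun y => 1 - h y) z = 1 - h z := by
    intro z hz
    have e1 : DFQ p (fun y => 1 - h y) z = DFQ p (fun y => (fun _ => (1:ℝ)) y - htil y) z :=
      DFQ_congr hz (fun y hy => by simp [htileq y hy])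
    rw [e1, DFQ_sub continuous_const hcl, DFQ_const]
    rw [DFQ_congr hz htileq, hQh z hz]
  have hhigh := harmonic_nonneg hg'c hp01 hQg'
    (by simp [hh0]) (by simp [hh1])
  intro z hz
  exact ⟨hlow z hz, by linarith [hhigh z hz]⟩

end Harmonic

section Jensen

lemma jensen_branch {g : ℝ → ℝ} (hg : Continuous g) {u v : ℝ} (huv : u < v) :
    ((∫ t in u..v, g t) / (v - u))^2 ≤ (∫ t in u..v, (g t)^2) / (v - u) ∧
    ((∫ t in u..v, (g t)^2) / (v - u) = ((∫ t in u..v, g t) / (v - u))^2 →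
      ∀ y ∈ Icc u v, g y = (∫ t in u..v, g t) / (v - u)) := by
  have hvu : (0:ℝ) < v - u := by linarith
  set m := ∫ t in u..v, g t with hm
  set S := ∫ t in u..v, (g t)^2 with hS
  set c := m / (v - u) with hc
  have hexp : (fun t => (g t - c)^2) = fun t => ((g t)^2 - (2*c) * (g t)) + c^2 := by
    funext t; ring
  have hint1 : IntervalIntegrable (fun t => (g t)^2) volume u v :=
    (hg.pow 2).intervalIntegrable u v
  have hint2 : IntervalIntegrable (fun t => (2*c) * (g t)) volume u v :=
    (continuous_const.mul hg).intervalIntegrable u v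
  have hJ : (∫ t in u..v, (g t - c)^2) = S - m^2 / (v - u) := by
    rw [hexp, intervalIntegral.integral_add (hint1.sub hint2) intervalIntegrable_const,
      intervalIntegral.integral_sub hint1 hint2, intervalIntegral.integral_const_mul]
    simp only [intervalIntegral.integral_const, smul_eq_mul, ← hm, ← hS]
    rw [hc]
    field_simp
    ring
  have hJnn : 0 ≤ ∫ t in u..v, (g t - c)^2 :=
    intervalIntegral.integral_nonneg huv.le (fun t _ => sq_nonneg _)
  constructor
  · rw [← sub_nonneg]
    have : S / (v - u) - c^2 = (S - m^2/(v-u)) / (v - u) := by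
      rw [hc]; field_simp
    rw [hc, this, ← hJ]
    positivity
  · intro heq y hy
    have hJ0 : (∫ t in u..v, (g t - c)^2) = 0 := by
      rw [hJ]
      have : S / (v - u) - c^2 = (S - m^2/(v-u)) / (v - u) := by
        rw [hc]; field_simp
      rw [hc] at heq
      have h2 : (S - m^2/(v-u)) / (v - u) = 0 := by rw [← this, heq]; ring
      have := (div_eq_zero_iff.1 h2)
      rcases this with h | h
      · exact h
      · linarith
    have := eq_zero_of_integral_zero (g := fun t => (g t - c)^2)
      ((hg.sub continuous_const).pow 2) huv (fun t _ => sq_nonneg _) hJ0 y hy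
    have h3 : (g y - c)^2 = 0 := this
    have := pow_eq_zero_iff (n := 2) (by norm_num) |>.1 h3
    linarith [this]

end Jensen

section Main

variable {p h : ℝ → ℝ}

set_option maxHeartbeats 1000000 in
theorem analytic_main
    (hpc : ContinuousOn p (Icc (0:ℝ) 1)) (hhc : ContinuousOn h (Icc (0:ℝ) 1))
    (hp01 : ∀ z ∈ Icc (0:ℝ) 1, p z ∈ Icc (0:ℝ) 1)
    (hp0 : p 0 = 1) (hp1 : p 1 = 0)
    (hQh : ∀ z ∈ Icc (0:ℝ) 1, DFQ p h z = h z)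
    (hh0 : h 0 = 0) (hh1 : h 1 = 1) :
    ∃ Ψ : ℝ → ℝ, Continuous Ψ ∧ (∀ y, 0 ≤ Ψ y) ∧ (∀ y, Ψ y ≤ 3) ∧
      (∀ z ∈ Icc (0:ℝ) 1, 0 ≤ Ψ z - DFQ p Ψ z) ∧
      (∀ z ∈ Ioo (0:ℝ) 1, 0 < Ψ z - DFQ p Ψ z) ∧
      (∀ y ∈ Ioo (0:ℝ) 1, ContinuousAt (fun z => Ψ z - DFQ p Ψ z) y) := by
  classical
  set htil : ℝ → ℝ := fun y => h (clamp y) with hhtil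
  have hcl : Continuous htil := hhc.comp_continuous continuous_clamp clamp_mem
  have htileq : ∀ y ∈ Icc (0:ℝ) 1, htil y = h y := fun y hy => by
    rw [hhtil]; simp only []; rw [clamp_of_mem hy]
  have h01 := harmonic_mem hhc hp01 hQh hh0 hh1
  have htil01 : ∀ y, htil y ∈ Icc (0:ℝ) 1 := fun y => h01 _ (clamp_mem y)
  have hQtil : ∀ z ∈ Icc (0:ℝ) 1, DFQ p htil z = h z := fun z hz => by
    rw [DFQ_congr hz htileq]; exact hQh z hz
  -- the flat pieces
  set S0 : Set ℝ := {c | c ∈ Icc (0:ℝ) 1 ∧ ∀ y ∈ Icc 0 c, h y = 0} with hS0def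
  have hS0ne : (0:ℝ) ∈ S0 := ⟨by norm_num, fun y hy => by
    have : y = 0 := le_antisymm hy.2 hy.1
    rw [this, hh0]⟩
  have hS0bdd : BddAbove S0 := ⟨1, fun c hc => hc.1.2⟩
  set c0 : ℝ := sSup S0 with hc0def
  have hc0mem : c0 ∈ Icc (0:ℝ) 1 :=
    ⟨le_csSup hS0bdd hS0ne, csSup_le ⟨0, hS0ne⟩ (fun c hc => hc.1.2)⟩
  have hzero : ∀ y ∈ Icc 0 c0, h y = 0 := by
    have hlt : ∀ y, 0 ≤ y → y < c0 → h y = 0 := by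
      intro y hy0 hyc
      obtain ⟨c, hcS, hyc'⟩ := exists_lt_of_lt_csSup ⟨0, hS0ne⟩ hyc
      exact hcS.2 y ⟨hy0, hyc'.le⟩
    intro y hy
    rcases lt_or_eq_of_le hy.2 with hlt' | heq
    · exact hlt y hy.1 hlt'
    · subst heq
      rcases eq_or_lt_of_le hc0mem.1 with h0c | h0c
      · rw [← h0c, hh0]
      · -- c0 > 0, continuity
        have hsub : Ico 0 c0 ⊆ {t | htil t = 0} := by
          intro t ht
          have ht1 : t ∈ Icc (0:ℝ) 1 := ⟨ht.1, le_trans ht.2.le hc0mem.2⟩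
          simp only [mem_setOf_eq]
          rw [htileq t ht1]
          exact hlt t ht.1 ht.2
        have hclosed : IsClosed {t : ℝ | htil t = 0} := isClosed_eq hcl continuous_const
        have hmem : c0 ∈ closure (Ico 0 c0) := by
          rw [closure_Ico (ne_of_lt h0c)]
          exact ⟨hc0mem.1, le_rfl⟩
        have := (hclosed.closure_subset_iff.2 hsub) hmem
        rw [← htileq c0 hc0mem]
        exact this
  have hc0max : ∀ z ∈ Icc (0:ℝ) 1, (∀ y ∈ Icc 0 z, h y = 0) → z ≤ c0 :=
    fun z hz hzz => le_csSup hS0bdd ⟨hz, hzz⟩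
  set S1 : Set ℝ := {c | c ∈ Icc (0:ℝ) 1 ∧ ∀ y ∈ Icc c 1, h y = 1} with hS1def
  have hS1ne : (1:ℝ) ∈ S1 := ⟨by norm_num, fun y hy => by
    have : y = 1 := le_antisymm hy.2 hy.1
    rw [this, hh1]⟩
  have hS1bdd : BddBelow S1 := ⟨0, fun c hc => hc.1.1⟩
  set c1 : ℝ := sInf S1 with hc1def
  have hc1mem : c1 ∈ Icc (0:ℝ) 1 :=
    ⟨le_csInf ⟨1, hS1ne⟩ (fun c hc => hc.1.1), csInf_le hS1bdd hS1ne⟩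
  have hone : ∀ y ∈ Icc c1 1, h y = 1 := by
    have hlt : ∀ y, y ≤ 1 → c1 < y → h y = 1 := by
      intro y hy1 hyc
      obtain ⟨c, hcS, hyc'⟩ := exists_lt_of_csInf_lt ⟨1, hS1ne⟩ hyc
      exact hcS.2 y ⟨hyc'.le, hy1⟩
    intro y hy
    rcases lt_or_eq_of_le hy.1 with hlt' | heq
    · exact hlt y hy.2 hlt'
    · rw [← heq]
      rcases eq_or_lt_of_le hc1mem.2 with h1c | h1c
      · rw [h1c, hh1]
      · have hsub : Ioc c1 1 ⊆ {t | htil t = 1} := by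
          intro t ht
          have ht1 : t ∈ Icc (0:ℝ) 1 := ⟨le_trans hc1mem.1 ht.1.le, ht.2⟩
          simp only [mem_setOf_eq]
          rw [htileq t ht1]
          exact hlt t ht.2 ht.1
        have hclosed : IsClosed {t : ℝ | htil t = 1} := isClosed_eq hcl continuous_const
        have hmem : c1 ∈ closure (Ioc c1 1) := by
          rw [closure_Ioc (ne_of_lt h1c)]
          exact ⟨le_rfl, hc1mem.2⟩
        have := (hclosed.closure_subset_iff.2 hsub) hmem
        rw [← htileq c1 hc1mem]
        exact this
  have hc1min : ∀ z ∈ Icc (0:ℝ) 1, (∀ y ∈ Icc z 1, h y = 1) → c1 ≤ z :=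
    fun z hz hzz => csInf_le hS1bdd ⟨hz, hzz⟩
  have hc01 : c0 < c1 := by
    by_contra hcon
    push_neg at hcon
    have h1 : h c1 = 0 := hzero c1 ⟨hc1mem.1, hcon⟩
    have h2 : h c1 = 1 := hone c1 ⟨le_rfl, hc1mem.2⟩
    linarith
  have hc0lt1 : c0 < 1 := lt_of_lt_of_le hc01 hc1mem.2
  have hc1gt0 : 0 < c1 := lt_of_le_of_lt hc0mem.1 hc01
  -- p = 1 on [0, c0]
  have pOne : ∀ z ∈ Icc 0 c0, p z = 1 := by
    intro z hz
    rcases eq_or_lt_of_le hz.1 with h0z | h0z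
    · rw [← h0z, hp0]
    · have hz1 : z < 1 := lt_of_le_of_lt hz.2 hc0lt1
      have hzI : z ∈ Icc (0:ℝ) 1 := ⟨hz.1, hz1.le⟩
      have key := hQtil z hzI
      rw [DFQ_eq hcl h0z hz1] at key
      have hI0 : (∫ t in (0:ℝ)..z, htil t) = 0 := by
        rw [intervalIntegral.integral_congr (g := fun _ => (0:ℝ)) (fun y hy => by
          rw [uIcc_of_le hz.1] at hy
          have hy1 : y ∈ Icc (0:ℝ) 1 := ⟨hy.1, le_trans hy.2 hz1.le⟩
          rw [htileq y hy1]
          exact hzero y ⟨hy.1, le_trans hy.2 hz.2⟩)]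
        simp
      have hI1 : 0 < ∫ t in z..(1:ℝ), htil t := by
        apply integral_pos_of_continuous hcl hz1
          (fun y hy => (htil01 y).1) (c := 1) ⟨hz1.le, le_rfl⟩
        rw [htileq 1 (by norm_num), hh1]; norm_num
      have hhz : h z = 0 := hzero z hz
      rw [hhz, hI0] at key
      have : (1 - p z) * ((∫ t in z..(1:ℝ), htil t) / (1 - z)) = 0 := by
        rw [← key]; ring
      rcases mul_eq_zero.1 this with hcase | hcase
      · linarith
      · exfalso
        have : 0 < (∫ t in z..(1:ℝ), htil t) / (1 - z) := div_pos hI1 (by linarith)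
        linarith
  -- p = 0 on [c1, 1]
  have pZero : ∀ z ∈ Icc c1 1, p z = 0 := by
    intro z hz
    rcases eq_or_lt_of_le hz.2 with h1z | h1z
    · rw [h1z, hp1]
    · have hz0 : 0 < z := lt_of_lt_of_le hc1gt0 hz.1
      have hzI : z ∈ Icc (0:ℝ) 1 := ⟨hz0.le, hz.2⟩
      have key := hQtil z hzI
      rw [DFQ_eq hcl hz0 h1z] at key
      have hI1 : (∫ t in z..(1:ℝ), htil t) = 1 - z := by
        rw [intervalIntegral.integral_congr (g := fun _ => (1:ℝ)) (fun y hy => by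
          rw [uIcc_of_le h1z.le] at hy
          have hy1 : y ∈ Icc (0:ℝ) 1 := ⟨le_trans hz0.le hy.1, hy.2⟩
          rw [htileq y hy1]
          exact hone y ⟨le_trans hz.1 hy.1, hy.2⟩)]
        simp
      have hhz : h z = 1 := hone z hz
      rw [hhz, hI1, div_self (by linarith : (1:ℝ) - z ≠ 0)] at key
      -- key : 1 = p z * (I0/z) + (1 - p z) * 1
      by_contra hpz
      have hpz' : 0 < p z := lt_of_le_of_ne (hp01 z hzI).1 (Ne.symm hpz)
      have hIlt : (∫ t in (0:ℝ)..z, htil t) < z := by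
        have hpos : 0 < ∫ t in (0:ℝ)..z, (1 - htil t) := by
          apply integral_pos_of_continuous (g := fun t => 1 - htil t) (continuous_const.sub hcl) hz0
            (fun y hy => by show 0 ≤ 1 - htil y; linarith [(htil01 y).2]) (c := 0) ⟨le_rfl, hz0.le⟩
          show 0 < 1 - htil 0
          rw [htileq 0 (by norm_num), hh0]; norm_num
        have hsub : (∫ t in (0:ℝ)..z, (1 - htil t))
            = z - ∫ t in (0:ℝ)..z, htil t := by
          rw [intervalIntegral.integral_sub intervalIntegrable_const
            (hcl.intervalIntegrable 0 z)]
          simp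
        linarith [hpos, hsub ▸ hpos]
      have : (∫ t in (0:ℝ)..z, htil t) / z = 1 := by
        have h2 : p z * ((∫ t in (0:ℝ)..z, htil t) / z) = p z := by linarith [key]
        field_simp at h2
        exact mul_left_cancel₀ (ne_of_gt hpz') (by linarith [h2])
      have : (∫ t in (0:ℝ)..z, htil t) = z := by
        field_simp at this
        linarith [this]
      linarith
  -- the Lyapunov function
  set htil2 : ℝ → ℝ := fun y => (htil y)^2 with hhtil2
  have hcl2 : Continuous htil2 := hcl.pow 2
  set ps1 : ℝ → ℝ := fun y => htil y - htil2 y with hps1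
  set ps2 : ℝ → ℝ := fun y => min (clamp y) c0 with hps2
  set ps3 : ℝ → ℝ := fun y => min (1 - clamp y) (1 - c1) with hps3
  have hps1c : Continuous ps1 := hcl.sub hcl2
  have hps2c : Continuous ps2 := continuous_clamp.min continuous_const
  have hps3c : Continuous ps3 := (continuous_const.sub continuous_clamp).min continuous_const
  set Ψ : ℝ → ℝ := fun y => ps1 y + ps2 y + ps3 y with hΨ
  have hΨc : Continuous Ψ := (hps1c.add hps2c).add hps3c
  have hps1b : ∀ y, 0 ≤ ps1 y ∧ ps1 y ≤ 1 := by
    intro y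
    have := htil01 y
    constructor
    · show 0 ≤ htil y - (htil y)^2
      nlinarith [this.1, this.2]
    · show htil y - (htil y)^2 ≤ 1
      nlinarith [this.1, this.2]
  have hps2b : ∀ y, 0 ≤ ps2 y ∧ ps2 y ≤ c0 := fun y =>
    ⟨le_min (clamp_mem y).1 hc0mem.1, min_le_right _ _⟩
  have hps3b : ∀ y, 0 ≤ ps3 y ∧ ps3 y ≤ 1 - c1 := fun y =>
    ⟨le_min (by linarith [(clamp_mem y).2]) (by linarith [hc1mem.2]), min_le_right _ _⟩
  have hΨnn : ∀ y, 0 ≤ Ψ y := fun y => by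
    have := hps1b y; have := hps2b y; have := hps3b y
    show 0 ≤ ps1 y + ps2 y + ps3 y
    linarith [(hps1b y).1, (hps2b y).1, (hps3b y).1]
  have hΨle : ∀ y, Ψ y ≤ 3 := fun y => by
    show ps1 y + ps2 y + ps3 y ≤ 3
    linarith [(hps1b y).2, (hps2b y).2, (hps3b y).2, hc0mem.2, hc1mem.1]
  -- decomposition of the defect
  have hDFQΨ : ∀ z, DFQ p Ψ z = DFQ p ps1 z + DFQ p ps2 z + DFQ p ps3 z := by
    intro z
    have e1 : DFQ p Ψ z = DFQ p (fun y => (fun u => ps1 u + ps2 u) y + ps3 y) z := rfl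
    rw [e1, DFQ_add (f := fun u => ps1 u + ps2 u) (hps1c.add hps2c) hps3c, DFQ_add hps1c hps2c]
  have hDFQps1 : ∀ z ∈ Icc (0:ℝ) 1, DFQ p ps1 z = h z - DFQ p htil2 z := by
    intro z hz
    have : DFQ p ps1 z = DFQ p htil z - DFQ p htil2 z := DFQ_sub hcl hcl2 z
    rw [this, hQtil z hz]
  -- defect of ps2
  have hw2pos : ∀ z ∈ Ioc 0 c0, ps2 z - DFQ p ps2 z = z / 2 := by
    intro z hz
    have hz1 : z < 1 := lt_of_le_of_lt hz.2 hc0lt1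
    have hzI : z ∈ Icc (0:ℝ) 1 := ⟨hz.1.le, hz1.le⟩
    have hpz : p z = 1 := pOne z ⟨hz.1.le, hz.2⟩
    rw [DFQ_eq hps2c hz.1 hz1, hpz]
    have hI : (∫ t in (0:ℝ)..z, ps2 t) = z^2/2 := by
      rw [intervalIntegral.integral_congr (g := fun t => t) (fun y hy => by
        rw [uIcc_of_le hz.1.le] at hy
        have hy1 : y ∈ Icc (0:ℝ) 1 := ⟨hy.1, le_trans hy.2 hz1.le⟩
        show min (clamp y) c0 = y
        rw [clamp_of_mem hy1]
        exact min_eq_left (le_trans hy.2 hz.2))]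
      rw [integral_id]
      ring
    rw [hI]
    have hps2z : ps2 z = z := by
      show min (clamp z) c0 = z
      rw [clamp_of_mem hzI]
      exact min_eq_left hz.2
    rw [hps2z]
    simp only [one_mul, sub_self, zero_mul, add_zero]
    have hz0' : z ≠ 0 := ne_of_gt hz.1
    field_simp
    ring
  have hw2nn : ∀ z ∈ Icc (0:ℝ) 1, 0 ≤ ps2 z - DFQ p ps2 z := by
    intro z hz
    rcases le_or_gt z c0 with hzc | hzc
    · rcases eq_or_lt_of_le hz.1 with h0z | h0z
      · rw [← h0z, DFQ_zero hp0]
        linarith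
      · rw [hw2pos z ⟨h0z, hzc⟩]
        linarith
    · have hle : DFQ p ps2 z ≤ c0 :=
        DFQ_le_const hps2c hz (hp01 z hz) (fun y _ => (hps2b y).2)
      have : ps2 z = c0 := by
        show min (clamp z) c0 = c0
        rw [clamp_of_mem hz]
        exact min_eq_right hzc.le
      linarith [this ▸ hle, this]
  -- defect of ps3
  have hw3pos : ∀ z ∈ Ico c1 1, ps3 z - DFQ p ps3 z = (1 - z) / 2 := by
    intro z hz
    have hz0 : 0 < z := lt_of_lt_of_le hc1gt0 hz.1
    have hzI : z ∈ Icc (0:ℝ) 1 := ⟨hz0.le, hz.2.le⟩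
    have hpz : p z = 0 := pZero z ⟨hz.1, hz.2.le⟩
    rw [DFQ_eq hps3c hz0 hz.2, hpz]
    have hI : (∫ t in z..(1:ℝ), ps3 t) = (1-z)^2/2 := by
      rw [intervalIntegral.integral_congr (g := fun t => 1 - t) (fun y hy => by
        rw [uIcc_of_le hz.2.le] at hy
        have hy1 : y ∈ Icc (0:ℝ) 1 := ⟨le_trans hz0.le hy.1, hy.2⟩
        show min (1 - clamp y) (1 - c1) = 1 - y
        rw [clamp_of_mem hy1]
        exact min_eq_left (by linarith [le_trans hz.1 hy.1]))]
      rw [intervalIntegral.integral_comp_sub_left (fun u : ℝ => u) 1, integral_id]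
      norm_num
    rw [hI]
    have hps3z : ps3 z = 1 - z := by
      show min (1 - clamp z) (1 - c1) = 1 - z
      rw [clamp_of_mem hzI]
      exact min_eq_left (by linarith [hz.1])
    rw [hps3z]
    simp only [zero_mul, sub_zero, one_mul, zero_add]
    have h1z' : (1:ℝ) - z ≠ 0 := by
      have : z < 1 := hz.2
      intro hc; linarith
    field_simp
    ring
  have hw3nn : ∀ z ∈ Icc (0:ℝ) 1, 0 ≤ ps3 z - DFQ p ps3 z := by
    intro z hz
    rcases le_or_gt c1 z with hzc | hzc
    · rcases eq_or_lt_of_le hz.2 with h1z | h1z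
      · rw [h1z, DFQ_one hp1]
        linarith
      · rw [hw3pos z ⟨hzc, h1z⟩]
        linarith
    · have hle : DFQ p ps3 z ≤ 1 - c1 :=
        DFQ_le_const hps3c hz (hp01 z hz) (fun y _ => (hps3b y).2)
      have : ps3 z = 1 - c1 := by
        show min (1 - clamp z) (1 - c1) = 1 - c1
        rw [clamp_of_mem hz]
        exact min_eq_right (by linarith [hzc.le])
      linarith [this ▸ hle, this]
  -- variance nonnegativity / positivity
  have hVkey : ∀ z ∈ Ioo (0:ℝ) 1,
      (0 ≤ DFQ p htil2 z - (h z)^2) ∧ (z ∈ Ioo c0 c1 → 0 < DFQ p htil2 z - (h z)^2) := by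
    intro z hz
    have hzI : z ∈ Icc (0:ℝ) 1 := ⟨hz.1.le, hz.2.le⟩
    have hkey : h z = p z * ((∫ t in (0:ℝ)..z, htil t) / z)
        + (1 - p z) * ((∫ t in z..(1:ℝ), htil t) / (1 - z)) := by
      rw [← hQtil z hzI, DFQ_eq hcl hz.1 hz.2]
    have hV : DFQ p htil2 z = p z * ((∫ t in (0:ℝ)..z, htil2 t) / z)
        + (1 - p z) * ((∫ t in z..(1:ℝ), htil2 t) / (1 - z)) := DFQ_eq hcl2 hz.1 hz.2
    have hj0 := jensen_branch hcl hz.1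
    have hj1 := jensen_branch hcl hz.2
    rw [sub_zero] at hj0
    set m0 := ∫ t in (0:ℝ)..z, htil t with hm0
    set m1 := ∫ t in z..(1:ℝ), htil t with hm1
    have hs0eq : (∫ t in (0:ℝ)..z, htil2 t) = ∫ t in (0:ℝ)..z, (htil t)^2 := rfl
    have hs1eq : (∫ t in z..(1:ℝ), htil2 t) = ∫ t in z..(1:ℝ), (htil t)^2 := rfl
    rw [hs0eq] at hV
    rw [hs1eq] at hV
    set s0 := ∫ t in (0:ℝ)..z, (htil t)^2 with hs0
    set s1 := ∫ t in z..(1:ℝ), (htil t)^2 with hs1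
    have hT0 : 0 ≤ s0 / z - (m0 / z)^2 := by
      have := hj0.1
      linarith [this]
    have hT1 : 0 ≤ s1 / (1 - z) - (m1 / (1 - z))^2 := by
      have := hj1.1
      linarith [this]
    have hpz := hp01 z hzI
    have hq' : 0 ≤ 1 - p z := by linarith [hpz.2]
    have hident : DFQ p htil2 z - (h z)^2
        = p z * (s0 / z - (m0 / z)^2) + (1 - p z) * (s1 / (1 - z) - (m1 / (1 - z))^2)
          + p z * (1 - p z) * (m0 / z - m1 / (1 - z))^2 := by
      rw [hV, hkey]
      ring
    constructor
    · nlinarith [mul_nonneg hpz.1 hT0, mul_nonneg hq' hT1,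
        mul_nonneg (mul_nonneg hpz.1 hq') (sq_nonneg (m0 / z - m1 / (1 - z))), hident]
    · intro hzc
      have hT0pos : 0 < s0 / z - (m0 / z)^2 := by
        rcases eq_or_lt_of_le hT0 with heq | hlt
        · exfalso
          have heq' : s0 / z = (m0 / z)^2 := by linarith
          have hall := hj0.2 heq'
          have h00 : htil 0 = m0 / z := hall 0 ⟨le_rfl, hz.1.le⟩
          rw [htileq 0 (by norm_num), hh0] at h00
          have : ∀ y ∈ Icc 0 z, h y = 0 := by
            intro y hy
            have hy1 : y ∈ Icc (0:ℝ) 1 := ⟨hy.1, le_trans hy.2 hz.2.le⟩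
            rw [← htileq y hy1, hall y hy]
            linarith [h00]
          exact absurd (hc0max z hzI this) (not_le.2 hzc.1)
        · exact hlt
      have hT1pos : 0 < s1 / (1 - z) - (m1 / (1 - z))^2 := by
        rcases eq_or_lt_of_le hT1 with heq | hlt
        · exfalso
          have heq' : s1 / (1 - z) = (m1 / (1 - z))^2 := by linarith
          have hall := hj1.2 heq'
          have h11 : htil 1 = m1 / (1 - z) := hall 1 ⟨hz.2.le, le_rfl⟩
          rw [htileq 1 (by norm_num), hh1] at h11
          have : ∀ y ∈ Icc z 1, h y = 1 := by
            intro y hy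
            have hy1 : y ∈ Icc (0:ℝ) 1 := ⟨le_trans hz.1.le hy.1, hy.2⟩
            rw [← htileq y hy1, hall y hy]
            linarith [h11]
          exact absurd (hc1min z hzI this) (not_le.2 hzc.2)
        · exact hlt
      rcases eq_or_lt_of_le hpz.1 with hp0' | hp0'
      · rw [← hp0'] at hident
        nlinarith [hident, hT1pos]
      · nlinarith [mul_pos hp0' hT0pos, mul_nonneg hq' hT1pos.le,
          mul_nonneg (mul_nonneg hpz.1 hq') (sq_nonneg (m0 / z - m1 / (1 - z))), hident]
  have hV0 : DFQ p htil2 0 - (h 0)^2 = 0 := by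
    rw [DFQ_zero hp0]
    show (htil 0)^2 - (h 0)^2 = 0
    rw [htileq 0 (by norm_num)]
    ring
  have hV1 : DFQ p htil2 1 - (h 1)^2 = 0 := by
    rw [DFQ_one hp1]
    show (htil 1)^2 - (h 1)^2 = 0
    rw [htileq 1 (by norm_num)]
    ring
  -- decomposition
  have hwdec : ∀ z ∈ Icc (0:ℝ) 1, Ψ z - DFQ p Ψ z =
      (DFQ p htil2 z - (h z)^2) + (ps2 z - DFQ p ps2 z) + (ps3 z - DFQ p ps3 z) := by
    intro z hz
    rw [hDFQΨ z, hDFQps1 z hz]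
    have hΨz : Ψ z = ps1 z + ps2 z + ps3 z := rfl
    have hps1z : ps1 z = h z - (h z)^2 := by
      show htil z - htil2 z = h z - (h z)^2
      show htil z - (htil z)^2 = h z - (h z)^2
      rw [htileq z hz]
    rw [hΨz, hps1z]
    ring
  refine ⟨Ψ, hΨc, hΨnn, hΨle, ?_, ?_, ?_⟩
  · -- nonneg on Icc
    intro z hz
    rw [hwdec z hz]
    rcases eq_or_lt_of_le hz.1 with h0z | h0z
    · rw [← h0z]
      rw [← h0z] at hz
      linarith [hV0, hw2nn 0 hz, hw3nn 0 hz]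
    · rcases eq_or_lt_of_le hz.2 with h1z | h1z
      · rw [h1z]
        rw [h1z] at hz
        linarith [hV1, hw2nn 1 hz, hw3nn 1 hz]
      · linarith [(hVkey z ⟨h0z, h1z⟩).1, hw2nn z hz, hw3nn z hz]
  · -- positive on Ioo
    intro z hz
    have hzI : z ∈ Icc (0:ℝ) 1 := ⟨hz.1.le, hz.2.le⟩
    rw [hwdec z hzI]
    rcases le_or_gt z c0 with hzc | hzc
    · have := hw2pos z ⟨hz.1, hzc⟩
      linarith [(hVkey z hz).1, hw3nn z hzI, this, hz.1]
    · rcases le_or_gt c1 z with hzc' | hzc'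
      · have := hw3pos z ⟨hzc', hz.2⟩
        linarith [(hVkey z hz).1, hw2nn z hzI, this, hz.2]
      · linarith [(hVkey z hz).2 ⟨hzc, hzc'⟩, hw2nn z hzI, hw3nn z hzI]
  · -- continuity on Ioo
    intro y hy
    have hGc : Continuous (fun z => ∫ t in (0:ℝ)..z, Ψ t) :=
      intervalIntegral.continuous_primitive (fun a b => hΨc.intervalIntegrable a b) 0
    have hpcy : ContinuousAt p y := hpc.continuousAt (Icc_mem_nhds hy.1 hy.2)
    have hF : ContinuousAt (fun z => Ψ z - (p z * ((∫ t in (0:ℝ)..z, Ψ t) / z)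
        + (1 - p z) * (((∫ t in (0:ℝ)..1, Ψ t) - ∫ t in (0:ℝ)..z, Ψ t) / (1 - z)))) y := by
      apply ContinuousAt.sub hΨc.continuousAt
      apply ContinuousAt.add
      · exact hpcy.mul (ContinuousAt.div hGc.continuousAt continuousAt_id (ne_of_gt hy.1))
      · refine (continuousAt_const.sub hpcy).mul (ContinuousAt.div
          (continuousAt_const.sub hGc.continuousAt)
          (continuousAt_const.sub continuousAt_id) ?_)
        have : y < 1 := hy.2
        intro hc
        have hc' : (1:ℝ) - y = 0 := hc
        linarith
    apply hF.congr
    filter_upwards [Ioo_mem_nhds hy.1 hy.2] with z hz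
    have hsplit : (∫ t in z..(1:ℝ), Ψ t) = (∫ t in (0:ℝ)..1, Ψ t) - ∫ t in (0:ℝ)..z, Ψ t := by
      have := intervalIntegral.integral_add_adjacent_intervals (μ := volume)
        (hΨc.intervalIntegrable 0 z) (hΨc.intervalIntegrable z 1)
      linarith [this]
    rw [DFQ_eq hΨc hz.1 hz.2, hsplit]

end Main

section Path

lemma path_converges {w htil : ℝ → ℝ} {z : ℕ → ℝ} {L : ℝ}
    (hz : ∀ n, z n ∈ Icc (0:ℝ) 1)
    (hw0 : Tendsto (fun n => w (z n)) atTop (nhds 0))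
    (hwpos : ∀ y ∈ Ioo (0:ℝ) 1, 0 < w y)
    (hwcont : ∀ y ∈ Ioo (0:ℝ) 1, ContinuousAt w y)
    (hM : Tendsto (fun n => htil (z n)) atTop (nhds L))
    (hcl : Continuous htil) (h0 : htil 0 = 0) (h1 : htil 1 = 1) :
    Tendsto z atTop (nhds 0) ∨ Tendsto z atTop (nhds 1) := by
  have claim1 : ∀ δ : ℝ, 0 < δ → δ < 1/2 → ∀ᶠ n in atTop, z n ∉ Icc δ (1-δ) := by
    intro δ hδ0 hδh
    by_contra hcon
    rw [Filter.not_eventually] at hcon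
    simp only [not_not] at hcon
    obtain ⟨φ, hφ, hφmem⟩ := Filter.extraction_of_frequently_atTop hcon
    obtain ⟨y, hymem, ψ, hψ, htend⟩ :=
      (isCompact_Icc (a := δ) (b := 1-δ)).tendsto_subseq hφmem
    have hyIoo : y ∈ Ioo (0:ℝ) 1 :=
      ⟨lt_of_lt_of_le hδ0 hymem.1, lt_of_le_of_lt hymem.2 (by linarith)⟩
    have h1' : Tendsto (fun k => w (z (φ (ψ k)))) atTop (nhds (w y)) :=
      ((hwcont y hyIoo).tendsto).comp htend
    have h2' : Tendsto (fun k => w (z (φ (ψ k)))) atTop (nhds 0) :=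
      hw0.comp ((hφ.comp hψ).tendsto_atTop)
    have : w y = 0 := tendsto_nhds_unique h1' h2'
    exact absurd this (ne_of_gt (hwpos y hyIoo))
  obtain ⟨δa, hδa0, hδa⟩ := Metric.continuousAt_iff.1 hcl.continuousAt (ε := 1/4) (by norm_num)
  obtain ⟨δb, hδb0, hδb⟩ :=
    Metric.continuousAt_iff.1 (hcl.continuousAt (x := 1)) (ε := 1/4) (by norm_num)
  have hm0 : 0 < min (min δa δb) (1/2) := by positivity
  have hmδa : min (min δa δb) (1/2) ≤ δa := le_trans (min_le_left _ _) (min_le_left _ _)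
  have hmδb : min (min δa δb) (1/2) ≤ δb := le_trans (min_le_left _ _) (min_le_right _ _)
  have hmh : min (min δa δb) (1/2) ≤ 1/2 := min_le_right _ _
  set δ0 : ℝ := min (min δa δb) (1/2) / 2 with hδ0def
  have hδ00 : 0 < δ0 := by positivity
  have hδ0h : δ0 < 1/2 := by rw [hδ0def]; linarith
  have hδ0a : δ0 < δa := by rw [hδ0def]; linarith
  have hδ0b : δ0 < δb := by rw [hδ0def]; linarith
  have hlow : ∀ y, y ∈ Icc (0:ℝ) 1 → y ≤ δ0 → htil y < 1/4 := by
    intro y hy hyδ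
    have hd : dist y 0 < δa := by
      rw [Real.dist_eq, sub_zero, abs_of_nonneg hy.1]; linarith
    have := hδa hd
    rw [Real.dist_eq, h0, sub_zero] at this
    calc htil y ≤ |htil y| := le_abs_self _
      _ < 1/4 := this
  have hhigh : ∀ y, y ∈ Icc (0:ℝ) 1 → 1 - δ0 ≤ y → 3/4 < htil y := by
    intro y hy hyδ
    have hd : dist y 1 < δb := by
      rw [Real.dist_eq, abs_of_nonpos (by linarith [hy.2])]; linarith
    have := hδb hd
    rw [Real.dist_eq, h1] at this
    have := abs_lt.1 this
    linarith [this.1]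
  have claim3 : ¬((∃ᶠ n in atTop, z n ≤ δ0) ∧ (∃ᶠ n in atTop, 1 - δ0 ≤ z n)) := by
    rintro ⟨hfa, hfb⟩
    have hLle : L ∈ Iic (1/4 : ℝ) := by
      apply isClosed_Iic.mem_of_frequently_of_tendsto _ hM
      apply hfa.mono
      intro n hn
      exact le_of_lt (hlow (z n) (hz n) hn)
    have hLge : L ∈ Ici (3/4 : ℝ) := by
      apply isClosed_Ici.mem_of_frequently_of_tendsto _ hM
      apply hfb.mono
      intro n hn
      exact le_of_lt (hhigh (z n) (hz n) hn)
    rw [mem_Iic] at hLle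
    rw [mem_Ici] at hLge
    linarith
  rw [not_and_or] at claim3
  rcases claim3 with hA | hB
  · -- eventually δ0 < z n, so z → 1
    rw [Filter.not_frequently] at hA
    simp only [not_le] at hA
    right
    rw [Metric.tendsto_atTop]
    intro ε hε
    set δ : ℝ := min δ0 (ε/2) with hδdef
    have hδpos : 0 < δ := lt_min hδ00 (by positivity)
    have hδlt : δ < 1/2 := lt_of_le_of_lt (min_le_left _ _) hδ0h
    have hδε : δ ≤ ε/2 := min_le_right _ _
    have hev := (claim1 δ hδpos hδlt).and hA
    obtain ⟨N, hN⟩ := Filter.eventually_atTop.1 hev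
    refine ⟨N, fun n hn => ?_⟩
    obtain ⟨hnot, hgt⟩ := hN n hn
    have hzn := hz n
    have : 1 - δ < z n := by
      by_contra hc
      push_neg at hc
      exact hnot ⟨le_trans (min_le_left _ _) hgt.le, hc⟩
    rw [Real.dist_eq, abs_of_nonpos (by linarith [hzn.2])]
    linarith [hzn.2]
  · -- eventually z n < 1 - δ0, so z → 0
    rw [Filter.not_frequently] at hB
    simp only [not_le] at hB
    left
    rw [Metric.tendsto_atTop]
    intro ε hε
    set δ : ℝ := min δ0 (ε/2) with hδdef
    have hδpos : 0 < δ := lt_min hδ00 (by positivity)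
    have hδlt : δ < 1/2 := lt_of_le_of_lt (min_le_left _ _) hδ0h
    have hδε : δ ≤ ε/2 := min_le_right _ _
    have hev := (claim1 δ hδpos hδlt).and hB
    obtain ⟨N, hN⟩ := Filter.eventually_atTop.1 hev
    refine ⟨N, fun n hn => ?_⟩
    obtain ⟨hnot, hlt⟩ := hN n hn
    have hzn := hz n
    have : z n < δ := by
      by_contra hc
      push_neg at hc
      refine hnot ⟨hc, ?_⟩
      have : δ ≤ δ0 := min_le_left _ _
      linarith
    rw [Real.dist_eq, sub_zero, abs_of_nonneg hzn.1]
    linarith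

end Path

end Stmt10

open Stmt10 in
set_option maxHeartbeats 2000000 in
/-- if `p ∈ H_α[0,1]` with values in `[0,1]`, `p(0) = 1` and `q(1) = 1`, and
`h` is the (unique) `Q`-harmonic α-Hölder function with `h(0) = 0`, `h(1) = 1`, then the
canonical chain `(Z_n)` started at `x` converges `ℙ_x`-a.s. to a random variable `Z_∞`
with values in `{0,1}`, with `ℙ_x(Z_∞ = 1) = h(x)` and `ℙ_x(Z_∞ = 0) = 1 − h(x)`. -/
theorem stmt10 (α : ℝ) (hα0 : 0 < α) (hα1 : α ≤ 1)
    (p : ℝ → ℝ) (hpH : ∃ M : ℝ, HolderOnI α M p)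
    (hp01 : ∀ x ∈ Set.Icc (0 : ℝ) 1, p x ∈ Set.Icc (0 : ℝ) 1)
    (hp0 : p 0 = 1) (hq1 : 1 - p 1 = 1)
    -- the harmonic function `h`
    (h : ℝ → ℝ) (hhH : ∃ M : ℝ, HolderOnI α M h)
    (hQh : ∀ x ∈ Set.Icc (0 : ℝ) 1, DFQ p h x = h x)
    (hh0 : h 0 = 0) (hh1 : h 1 = 1)
    -- the canonical Markov chain with kernel `Q` started at `x`
    {Ω : Type*} [MeasurableSpace Ω] (x : ℝ) (hx : x ∈ Set.Icc (0 : ℝ) 1)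
    (ℙx : Measure Ω) [IsProbabilityMeasure ℙx]
    (Z : ℕ → Ω → ℝ) (hZmeas : ∀ n, StronglyMeasurable (Z n))
    (hZrange : ∀ n ω, Z n ω ∈ Set.Icc (0 : ℝ) 1)
    (hZ0 : ∀ᵐ ω ∂ℙx, Z 0 ω = x)
    (hMarkov : ∀ n : ℕ, ∀ f : ℝ → ℝ, Measurable f → (∃ C : ℝ, ∀ y : ℝ, |f y| ≤ C) →
      ℙx[fun ω => f (Z (n + 1) ω)|(MeasureTheory.Filtration.natural Z hZmeas) n]
        =ᵐ[ℙx] fun ω => DFQ p f (Z n ω)) :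
    ∃ Zinf : Ω → ℝ,
      (∀ᵐ ω ∂ℙx, Tendsto (fun n => Z n ω) atTop (nhds (Zinf ω))) ∧
      (∀ᵐ ω ∂ℙx, Zinf ω = 0 ∨ Zinf ω = 1) ∧
      ℙx {ω | Zinf ω = 1} = ENNReal.ofReal (h x) ∧
      ℙx {ω | Zinf ω = 0} = ENNReal.ofReal (1 - h x) := by
  classical
  obtain ⟨Mp, hpH⟩ := hpH
  obtain ⟨Mh, hhH⟩ := hhH
  have hpc := holder_continuousOn hα0 hpH
  have hhc := holder_continuousOn hα0 hhH
  have hp1 : p 1 = 0 := by linarith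
  obtain ⟨Ψ, hΨc, hΨnn, hΨle, hwnn, hwpos, hwcont⟩ :=
    analytic_main hpc hhc hp01 hp0 hp1 hQh hh0 hh1
  set F := MeasureTheory.Filtration.natural Z hZmeas with hF
  set htil : ℝ → ℝ := fun y => h (clamp y) with hhtil
  have hcl : Continuous htil := hhc.comp_continuous continuous_clamp clamp_mem
  have htileq : ∀ y ∈ Icc (0:ℝ) 1, htil y = h y := fun y hy => by
    rw [hhtil]; simp only []; rw [clamp_of_mem hy]
  have h01 := harmonic_mem hhc hp01 hQh hh0 hh1
  have htil01 : ∀ y, htil y ∈ Icc (0:ℝ) 1 := fun y => h01 _ (clamp_mem y)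
  have hQtil : ∀ z ∈ Icc (0:ℝ) 1, DFQ p htil z = h z := fun z hz => by
    rw [DFQ_congr hz htileq]; exact hQh z hz
  -- integrability of bounded functions of the chain
  have hint : ∀ (g : ℝ → ℝ) (n : ℕ) (C : ℝ), Measurable g → (∀ y, |g y| ≤ C) →
      Integrable (fun ω => g (Z n ω)) ℙx := by
    intro g n C hg hC
    refine Integrable.mono' (integrable_const C) ?_ (Filter.Eventually.of_forall (fun ω => ?_))
    · exact ((hg.comp (hZmeas n).measurable).aestronglyMeasurable)
    · rw [Real.norm_eq_abs]; exact hC _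
  -- expectation transport
  have hexp : ∀ (n : ℕ) (f : ℝ → ℝ), Measurable f → (∃ C : ℝ, ∀ y, |f y| ≤ C) →
      (∫ ω, f (Z (n+1) ω) ∂ℙx) = ∫ ω, DFQ p f (Z n ω) ∂ℙx := by
    intro n f hf hfb
    have h1 := hMarkov n f hf hfb
    have h2 := MeasureTheory.integral_condExp (μ := ℙx)
      (f := fun ω => f (Z (n+1) ω)) (F.le n)
    rw [← h2]
    exact integral_congr_ae h1
  -- DFQ-composed integrability
  have hDFQint : ∀ (n : ℕ) (f : ℝ → ℝ), Measurable f → (∃ C : ℝ, ∀ y, |f y| ≤ C) →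
      Integrable (fun ω => DFQ p f (Z n ω)) ℙx := by
    intro n f hf hfb
    exact (integrable_condExp).congr (hMarkov n f hf hfb)
  -- Lyapunov decay: w (Z n) → 0 a.s.
  have hΨmeas : Measurable Ψ := hΨc.measurable
  have hΨbd : ∀ y, |Ψ y| ≤ 3 := fun y => abs_le.2 ⟨by linarith [hΨnn y], hΨle y⟩
  have hΨint : ∀ n, Integrable (fun ω => Ψ (Z n ω)) ℙx :=
    fun n => hint Ψ n 3 hΨmeas hΨbd
  have hDΨint : ∀ n, Integrable (fun ω => DFQ p Ψ (Z n ω)) ℙx :=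
    fun n => hDFQint n Ψ hΨmeas ⟨3, hΨbd⟩
  have hwint : ∀ n, Integrable (fun ω => Ψ (Z n ω) - DFQ p Ψ (Z n ω)) ℙx :=
    fun n => (hΨint n).sub (hDΨint n)
  set En : ℕ → ℝ := fun n => ∫ ω, (Ψ (Z n ω) - DFQ p Ψ (Z n ω)) ∂ℙx with hEn
  have hEnval : ∀ n, En n = (∫ ω, Ψ (Z n ω) ∂ℙx) - ∫ ω, Ψ (Z (n+1) ω) ∂ℙx := by
    intro n
    rw [hEn]
    simp only []
    rw [integral_sub (hΨint n) (hDΨint n), hexp n Ψ hΨmeas ⟨3, hΨbd⟩]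
  have hInn : ∀ n, 0 ≤ ∫ ω, Ψ (Z n ω) ∂ℙx :=
    fun n => integral_nonneg (fun ω => hΨnn _)
  have hIle : ∀ n, (∫ ω, Ψ (Z n ω) ∂ℙx) ≤ 3 := by
    intro n
    calc (∫ ω, Ψ (Z n ω) ∂ℙx) ≤ ∫ _ω, (3:ℝ) ∂ℙx :=
        integral_mono (hΨint n) (integrable_const 3) (fun ω => hΨle _)
      _ = 3 := by simp
  have hEnnn : ∀ n, 0 ≤ En n := fun n =>
    integral_nonneg (fun ω => sub_nonneg.2 (by
      have := hwnn _ (hZrange n ω)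
      linarith [this]))
  have hpartial : ∀ N, (∑ n ∈ Finset.range N, En n) ≤ 3 := by
    intro N
    have htel : (∑ n ∈ Finset.range N, En n)
        = (∫ ω, Ψ (Z 0 ω) ∂ℙx) - ∫ ω, Ψ (Z N ω) ∂ℙx := by
      induction N with
      | zero => simp
      | succ N ih =>
        rw [Finset.sum_range_succ, ih, hEnval N]
        ring
    rw [htel]
    linarith [hIle 0, hInn N]
  -- almost sure convergence of the Lyapunov observable to 0
  have hWae : ∀ᵐ ω ∂ℙx, Tendsto (fun n => Ψ (Z n ω) - DFQ p Ψ (Z n ω)) atTop (nhds 0) := by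
    have haemeas : ∀ n, AEMeasurable
        (fun ω => ENNReal.ofReal (Ψ (Z n ω) - DFQ p Ψ (Z n ω))) ℙx := by
      intro n
      exact ENNReal.measurable_ofReal.comp_aemeasurable
        ((hwint n).aestronglyMeasurable.aemeasurable)
    have hlin : ∀ n, (∫⁻ ω, ENNReal.ofReal (Ψ (Z n ω) - DFQ p Ψ (Z n ω)) ∂ℙx)
        = ENNReal.ofReal (En n) := by
      intro n
      rw [hEn]
      simp only []
      have hnn : 0 ≤ᵐ[ℙx] fun ω => Ψ (Z n ω) - DFQ p Ψ (Z n ω) := by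
        filter_upwards with ω
        have := hwnn _ (hZrange n ω)
        simpa using this
      rw [← MeasureTheory.ofReal_integral_eq_lintegral_ofReal (hwint n) hnn]
    have htsum : (∫⁻ ω, (∑' n, ENNReal.ofReal (Ψ (Z n ω) - DFQ p Ψ (Z n ω))) ∂ℙx)
        ≤ ENNReal.ofReal 3 := by
      rw [MeasureTheory.lintegral_tsum haemeas]
      have : ∀ s : Finset ℕ, (∑ n ∈ s, ENNReal.ofReal (En n)) ≤ ENNReal.ofReal 3 := by
        intro s
        rcases s.exists_nat_subset_range with ⟨N, hN⟩
        calc (∑ n ∈ s, ENNReal.ofReal (En n))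
            ≤ ∑ n ∈ Finset.range N, ENNReal.ofReal (En n) :=
              Finset.sum_le_sum_of_subset hN
          _ = ENNReal.ofReal (∑ n ∈ Finset.range N, En n) :=
              (ENNReal.ofReal_sum_of_nonneg (fun n _ => hEnnn n)).symm
          _ ≤ ENNReal.ofReal 3 := ENNReal.ofReal_le_ofReal (hpartial N)
      calc (∑' n, ∫⁻ ω, ENNReal.ofReal (Ψ (Z n ω) - DFQ p Ψ (Z n ω)) ∂ℙx)
          = ∑' n, ENNReal.ofReal (En n) := tsum_congr hlin
        _ ≤ ENNReal.ofReal 3 := by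
            rw [ENNReal.tsum_eq_iSup_sum]
            exact iSup_le this
    have hae1 : ∀ᵐ ω ∂ℙx,
        (∑' n, ENNReal.ofReal (Ψ (Z n ω) - DFQ p Ψ (Z n ω))) < ⊤ :=
      ae_lt_top' (AEMeasurable.ennreal_tsum haemeas)
        (lt_of_le_of_lt htsum ENNReal.ofReal_lt_top).ne
    filter_upwards [hae1] with ω hω
    have hsummable := ENNReal.summable_toReal hω.ne
    have heq : (fun n => (ENNReal.ofReal (Ψ (Z n ω) - DFQ p Ψ (Z n ω))).toReal)
        = fun n => Ψ (Z n ω) - DFQ p Ψ (Z n ω) := by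
      funext n
      rw [ENNReal.toReal_ofReal]
      have := hwnn _ (hZrange n ω)
      linarith [this]
    rw [heq] at hsummable
    exact hsummable.tendsto_atTop_zero
  -- martingale h(Z n) converges a.e.
  set Mn : ℕ → Ω → ℝ := fun n ω => htil (Z n ω) with hMn
  have htilbd : ∀ y, |htil y| ≤ 1 := fun y =>
    abs_le.2 ⟨by linarith [(htil01 y).1], (htil01 y).2⟩
  have hadp : StronglyAdapted F Mn := fun n =>
    hcl.comp_stronglyMeasurable (Filtration.stronglyAdapted_natural hZmeas n)
  have hintM : ∀ n, Integrable (Mn n) ℙx := fun n => hint htil n 1 hcl.measurable htilbd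
  have hmart : ∀ n, Mn n =ᵐ[ℙx] ℙx[Mn (n+1)|F n] := by
    intro n
    have h1 := hMarkov n htil hcl.measurable ⟨1, htilbd⟩
    have h2 : (fun ω => DFQ p htil (Z n ω)) = Mn n := by
      funext ω
      rw [hQtil _ (hZrange n ω)]
      rw [hMn]
      simp only []
      exact (htileq _ (hZrange n ω)).symm
    rw [h2] at h1
    exact h1.symm
  have hmgale : Martingale Mn F ℙx := martingale_nat hadp hintM hmart
  have hbdd : ∀ n, eLpNorm (Mn n) 1 ℙx ≤ ((1 : NNReal) : ℝ≥0∞) := by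
    intro n
    have hb := MeasureTheory.eLpNorm_le_of_ae_bound (μ := ℙx) (p := 1) (C := 1)
      (f := Mn n)
      (Filter.Eventually.of_forall (fun ω => by rw [Real.norm_eq_abs]; exact htilbd _))
    simpa using hb
  have hMconv := hmgale.submartingale.ae_tendsto_limitProcess hbdd
  -- a.e. convergence of Z to 0 or 1
  set A1 : Set Ω := {ω | Tendsto (fun n => Z n ω) atTop (nhds 1)} with hA1
  set A0 : Set Ω := {ω | Tendsto (fun n => Z n ω) atTop (nhds 0)} with hA0
  have hA1meas : MeasurableSet A1 :=
    measurableSet_tendsto _ (fun n => (hZmeas n).measurable)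
  have hdisj : ∀ ω, ω ∈ A0 → ω ∉ A1 := by
    intro ω h0' h1'
    have := tendsto_nhds_unique (h0' : Tendsto _ atTop (nhds (0:ℝ))) h1'
    norm_num at this
  have htil0val : htil 0 = 0 := by
    rw [hhtil]; simp only []
    rw [clamp_of_mem (by norm_num : (0:ℝ) ∈ Icc (0:ℝ) 1), hh0]
  have htil1val : htil 1 = 1 := by
    rw [hhtil]; simp only []
    rw [clamp_of_mem (by norm_num : (1:ℝ) ∈ Icc (0:ℝ) 1), hh1]
  have hae01 : ∀ᵐ ω ∂ℙx, ω ∈ A0 ∪ A1 := by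
    filter_upwards [hWae, hMconv] with ω hw hm
    have hres := path_converges (fun n => hZrange n ω) hw hwpos hwcont hm hcl
      htil0val htil1val
    rcases hres with hr | hr
    · exact Or.inl hr
    · exact Or.inr hr
  set Zinf : Ω → ℝ := fun ω => if ω ∈ A1 then 1 else 0 with hZinf
  -- the law at infinity
  have hconst : ∀ n, (∫ ω, Mn n ω ∂ℙx) = h x := by
    intro n
    induction n with
    | zero =>
      have he : (fun ω => Mn 0 ω) =ᵐ[ℙx] fun _ => htil x := by
        filter_upwards [hZ0] with ω hω
        rw [hMn]; simp only []; rw [hω]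
      rw [integral_congr_ae he]
      simp [htileq x hx]
    | succ n ih =>
      have h1 : (∫ ω, Mn (n+1) ω ∂ℙx) = ∫ ω, DFQ p htil (Z n ω) ∂ℙx :=
        hexp n htil hcl.measurable ⟨1, htilbd⟩
      rw [h1, ← ih]
      apply integral_congr_ae
      refine Filter.Eventually.of_forall (fun ω => ?_)
      show DFQ p htil (Z n ω) = Mn n ω
      rw [hQtil _ (hZrange n ω)]
      exact (htileq _ (hZrange n ω)).symm
  have hDCT : Tendsto (fun n => ∫ ω, Mn n ω ∂ℙx) atTop
      (nhds (∫ ω, A1.indicator (fun _ => (1:ℝ)) ω ∂ℙx)) := by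
    apply MeasureTheory.tendsto_integral_of_dominated_convergence (bound := fun _ => (1:ℝ))
    · exact fun n => (hintM n).aestronglyMeasurable
    · exact integrable_const 1
    · exact fun n => Filter.Eventually.of_forall
        (fun ω => by rw [Real.norm_eq_abs]; exact htilbd _)
    · filter_upwards [hae01] with ω hω
      rcases hω with h0' | h1'
      · have ht : Tendsto (fun n => Mn n ω) atTop (nhds (htil 0)) :=
          (hcl.continuousAt.tendsto).comp h0'
        rw [htil0val] at ht
        rw [Set.indicator_of_notMem (hdisj ω h0')]
        exact ht
      · have ht : Tendsto (fun n => Mn n ω) atTop (nhds (htil 1)) :=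
          (hcl.continuousAt.tendsto).comp h1'
        rw [htil1val] at ht
        rw [Set.indicator_of_mem h1']
        exact ht
  have hIind : (∫ ω, A1.indicator (fun _ => (1:ℝ)) ω ∂ℙx) = (ℙx A1).toReal := by
    rw [MeasureTheory.integral_indicator_const (1:ℝ) hA1meas]
    simp
    rfl
  have hhx : h x = (ℙx A1).toReal := by
    rw [hIind] at hDCT
    have h2 : Tendsto (fun n => ∫ ω, Mn n ω ∂ℙx) atTop (nhds (h x)) := by
      rw [show (fun n => ∫ ω, Mn n ω ∂ℙx) = fun _ => h x from funext hconst]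
      exact tendsto_const_nhds
    exact tendsto_nhds_unique h2 hDCT
  refine ⟨Zinf, ?_, ?_, ?_, ?_⟩
  · filter_upwards [hae01] with ω hω
    rcases hω with h0' | h1'
    · rw [hZinf]; simp only []
      rw [if_neg (hdisj ω h0')]
      exact h0'
    · rw [hZinf]; simp only []
      rw [if_pos h1']
      exact h1'
  · refine Filter.Eventually.of_forall (fun ω => ?_)
    rw [hZinf]; simp only []
    by_cases hc : ω ∈ A1
    · right; rw [if_pos hc]
    · left; rw [if_neg hc]
  · have hset : {ω | Zinf ω = 1} = A1 := by
      ext ω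
      rw [hZinf]
      simp only [mem_setOf_eq]
      by_cases hc : ω ∈ A1
      · simp [hc]
      · simp [hc]
    rw [hset, hhx, ENNReal.ofReal_toReal (measure_ne_top _ _)]
  · have hset : {ω | Zinf ω = 0} = A1ᶜ := by
      ext ω
      rw [hZinf]
      simp only [mem_setOf_eq, mem_compl_iff]
      by_cases hc : ω ∈ A1
      · simp [hc]
      · simp [hc]
    rw [hset, prob_compl_eq_one_sub hA1meas, hhx,
      ENNReal.ofReal_sub _ ENNReal.toReal_nonneg, ENNReal.ofReal_one,
      ENNReal.ofReal_toReal (measure_ne_top _ _)]
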